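/- Let T, Z be finite sets and Q a conditional probability kernel from T to Z with strictly positive output distribution under uniform input. Define ψ(s) = ln Σ_z (Σ_t (1/|T|) Q(z|t)^{1+s}) / Q_Z(z)^s where Q_Z(z) = Σ_t (1/|T|) Q(z|t). Then lim_{s→0+} ψ(s)/s = I(Uniform(T), Q), the mutual information between a uniform input on T and the output of Q. -/

import Mathlib

open Finset Filter

/-- lim_{s→0+} ψ(s)/s equals the mutual information with uniform input. -/
theorem psi_div_s_tendsto_mutualInfo
    {T Z : Type*} [Fintype T] [Fintype Z] [Nonempty T] [Nonempty Z]
    (Q : T → Z → ℝ) (hQnn : ∀ t z, 0 ≤ Q t z) (hQsum : ∀ t, ∑ z : Z, Q t z = 1)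
    (QZ : Z → ℝ) (hQZ : ∀ z, QZ z = ∑ t : T, (1 / Fintype.card T : ℝ) * Q t z)
    (hpos : ∀ z, 0 < QZ z)
    (ψ : ℝ → ℝ)
    (hψ : ∀ s, ψ s =
      Real.log (∑ z : Z,
        (∑ t : T, (1 / Fintype.card T : ℝ) * Q t z ^ (1 + s)) / QZ z ^ s))
    (I : ℝ)
    (hI : I = ∑ t : T, ∑ z : Z,
      (1 / Fintype.card T : ℝ) * Q t z * Real.log (Q t z / QZ z)) :
    Tendsto (fun s => ψ s / s) (nhdsWithin 0 (Set.Ioi 0)) (nhds I) := by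
  classical
  set c : ℝ := (1 / Fintype.card T : ℝ) with hc
  set F : ℝ → ℝ := fun s => ∑ z : Z, (∑ t : T, c * Q t z ^ (1 + s)) / QZ z ^ s with hF
  -- derivative of s ↦ a^(1+s) at 0 for a ≥ 0
  have hbase : ∀ a : ℝ, 0 ≤ a →
      HasDerivAt (fun s : ℝ => a ^ (1 + s)) (a * Real.log a) 0 := by
    intro a ha
    rcases eq_or_lt_of_le ha with h0 | h0
    · have hcont : ContinuousAt (fun s : ℝ => 1 + s) 0 := by fun_prop
      have hne : ∀ᶠ s in nhds (0 : ℝ), 1 + s ≠ 0 := hcont.eventually_ne (by norm_num)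
      have heq : (fun s : ℝ => a ^ (1 + s)) =ᶠ[nhds (0 : ℝ)] fun _ => (0 : ℝ) := by
        filter_upwards [hne] with s hs
        rw [← h0, Real.zero_rpow hs]
      have : HasDerivAt (fun _ : ℝ => (0 : ℝ)) (a * Real.log a) 0 := by
        rw [← h0]; simpa using hasDerivAt_const (0 : ℝ) (0 : ℝ)
      exact this.congr_of_eventuallyEq heq
    · have hout := (Real.hasStrictDerivAt_const_rpow h0 (1 + 0)).hasDerivAt
      have hin : HasDerivAt (fun s : ℝ => 1 + s) 1 0 := (hasDerivAt_id (0:ℝ)).const_add 1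
      have := hout.comp 0 hin
      exact this.congr_deriv (by simp)
  have hN : ∀ z, HasDerivAt (fun s : ℝ => ∑ t : T, c * Q t z ^ (1 + s))
      (∑ t : T, c * (Q t z * Real.log (Q t z))) 0 :=
    fun z => HasDerivAt.fun_sum fun t _ => (hbase _ (hQnn t z)).const_mul c
  have hD : ∀ z, HasDerivAt (fun s : ℝ => QZ z ^ s) (Real.log (QZ z)) 0 := by
    intro z
    have := (Real.hasStrictDerivAt_const_rpow (hpos z) 0).hasDerivAt
    simpa [Real.rpow_zero] using this
  have hN0 : ∀ z, (∑ t : T, c * Q t z ^ (1 + (0:ℝ))) = QZ z := by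
    intro z; rw [hQZ]; simp [Real.rpow_one, hc]
  have hD0 : ∀ z, QZ z ^ (0:ℝ) = 1 := fun z => Real.rpow_zero _
  have hFz : ∀ z, HasDerivAt (fun s : ℝ => (∑ t : T, c * Q t z ^ (1 + s)) / QZ z ^ s)
      (∑ t : T, c * (Q t z * Real.log (Q t z)) - QZ z * Real.log (QZ z)) 0 := by
    intro z
    have h := (hN z).div (hD z) (by rw [hD0 z]; norm_num)
    refine h.congr_deriv ?_
    rw [hN0 z, hD0 z]; ring
  set I' : ℝ := ∑ z : Z, (∑ t : T, c * (Q t z * Real.log (Q t z)) - QZ z * Real.log (QZ z))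
    with hI'
  have hFderiv : HasDerivAt F I' 0 := HasDerivAt.fun_sum fun z _ => hFz z
  have hsumQZ : ∑ z : Z, QZ z = 1 := by
    have hcard : (Fintype.card T : ℝ) ≠ 0 := by
      exact_mod_cast Fintype.card_ne_zero
    calc ∑ z : Z, QZ z = ∑ z : Z, ∑ t : T, c * Q t z := by
          refine Finset.sum_congr rfl fun z _ => ?_; rw [hQZ]
      _ = ∑ t : T, c * ∑ z : Z, Q t z := by
          rw [Finset.sum_comm]; simp [Finset.mul_sum]
      _ = 1 := by simp [hQsum, hc]
  have hF0 : F 0 = 1 := by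
    have hFv : F 0 = ∑ z : Z, QZ z := by
      rw [hF]
      simp only [hD0, div_one]
      exact Finset.sum_congr rfl fun z _ => hN0 z
    rw [hFv, hsumQZ]
  have hII' : I = I' := by
    rw [hI, Finset.sum_comm, hI']
    refine Finset.sum_congr rfl fun z _ => ?_
    have hterm : ∀ t : T, c * Q t z * Real.log (Q t z / QZ z)
        = c * (Q t z * Real.log (Q t z)) - c * Q t z * Real.log (QZ z) := by
      intro t
      rcases eq_or_lt_of_le (hQnn t z) with h0 | h0
      · simp [← h0]
      · rw [Real.log_div (ne_of_gt h0) (ne_of_gt (hpos z))]; ring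
    calc ∑ t : T, c * Q t z * Real.log (Q t z / QZ z)
        = ∑ t : T, (c * (Q t z * Real.log (Q t z)) - c * Q t z * Real.log (QZ z)) :=
          Finset.sum_congr rfl fun t _ => hterm t
      _ = ∑ t : T, c * (Q t z * Real.log (Q t z))
            - (∑ t : T, c * Q t z) * Real.log (QZ z) := by
          rw [Finset.sum_sub_distrib, Finset.sum_mul]
      _ = ∑ t : T, c * (Q t z * Real.log (Q t z)) - QZ z * Real.log (QZ z) := by
          rw [← hQZ z]
  have hψF : ψ = fun s => Real.log (F s) := funext fun s => hψ s
  have hψderiv : HasDerivAt ψ I 0 := by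
    rw [hψF]
    have := hFderiv.log (by rw [hF0]; norm_num)
    rw [hF0, div_one] at this
    rwa [hII']
  have hψ0 : ψ 0 = 0 := by rw [hψF]; simp [hF0]
  have hslope := hasDerivAt_iff_tendsto_slope.mp hψderiv
  have hmono : nhdsWithin (0:ℝ) (Set.Ioi 0) ≤ nhdsWithin 0 {(0:ℝ)}ᶜ :=
    nhdsWithin_mono _ (fun s hs => ne_of_gt hs)
  have := hslope.mono_left hmono
  refine this.congr' ?_
  filter_upwards [self_mem_nhdsWithin] with s hs
  simp [slope_def_field, hψ0]
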